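/- Let p be an odd prime, j a positive integer, and B the (p^j−1)×(p^j−1) matrix I + S where S is as in the nilpotence lemma (entries: S_{1,p^j−1} = −p^j, S_{2,1} = −1, S_{k+1,k} = 1 for 2 ≤ k ≤ p^j−2), with the first row taken modulo p^{j+1} and the other rows modulo p. Then the (1,1) entry of B^{p^j − 1} is congruent to p^j + 1 modulo p^{j+1}, and for 1 ≤ k ≤ p^j − 2 the matrix B^k has a −1 entry in its first column below the diagonal; in particular B^k ≠ I for 1 ≤ k ≤ p^j − 1. -/

import Mathlib

/-- The matrix `S` (0-indexed): `S_{0, p^j-2} = -p^j`, `S_{1,0} = -1`, and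
`S_{k+1,k} = 1` for `1 ≤ k ≤ p^j - 3`; all other entries vanish. -/
def Smat (p j : ℕ) : Matrix (Fin (p ^ j - 1)) (Fin (p ^ j - 1)) ℤ :=
  Matrix.of fun i k =>
    if (i : ℕ) = 0 ∧ (k : ℕ) = p ^ j - 2 then -(p : ℤ) ^ j
    else if (i : ℕ) = (k : ℕ) + 1 then (if (k : ℕ) = 0 then -1 else 1)
    else 0

/-- The matrix `B = I + S` over the integers; congruences in its first row are
taken mod `p^{j+1}` and in the remaining rows mod `p`. -/
def Bmat (p j : ℕ) : Matrix (Fin (p ^ j - 1)) (Fin (p ^ j - 1)) ℤ := 1 + Smat p j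

lemma Smat_pow_col0 (p j : ℕ) (h3 : 3 ≤ p ^ j) (hn : 0 < p ^ j - 1)
    (t : ℕ) (ht1 : 1 ≤ t) (ht2 : t ≤ p ^ j - 2) : ∀ i : Fin (p ^ j - 1),
    (Smat p j ^ t) i ⟨0, hn⟩ = if (i : ℕ) = t then -1 else 0 := by
  induction t with
  | zero => omega
  | succ t ih =>
    intro i
    rcases Nat.eq_or_lt_of_le ht1 with h1 | h1
    · -- t + 1 = 1, i.e. t = 0
      have ht0 : t = 0 := by omega
      subst ht0
      simp only [pow_one, Smat, Matrix.of_apply]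
      have : ¬ ((0:ℕ) = p ^ j - 2) := by omega
      simp [this]
    · -- t ≥ 1
      have ht1' : 1 ≤ t := by omega
      have ht2' : t ≤ p ^ j - 2 := by omega
      have htlt : t < p ^ j - 1 := by omega
      rw [pow_succ', Matrix.mul_apply]
      rw [Finset.sum_eq_single (⟨t, htlt⟩ : Fin (p ^ j - 1))]
      · rw [ih ht1' ht2']
        simp only [if_pos rfl, mul_neg_one, Smat, Matrix.of_apply]
        have h1' : ¬ ((t:ℕ) = p ^ j - 2) := by omega
        have h2' : (t:ℕ) ≠ 0 := by omega
        by_cases hi : (i : ℕ) = t + 1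
        · simp [hi, h1', h2']
        · simp [hi, h1']
      · intro b _ hb
        rw [ih ht1' ht2']
        have : ¬((b : ℕ) = t) := fun h => hb (Fin.ext h)
        simp [this]
      · intro h; exact absurd (Finset.mem_univ _) h

lemma Smat_pow_top (p j : ℕ) (h3 : 3 ≤ p ^ j) (hn : 0 < p ^ j - 1)
    (i : Fin (p ^ j - 1)) :
    (Smat p j ^ (p ^ j - 1)) i ⟨0, hn⟩ = if (i : ℕ) = 0 then (p : ℤ) ^ j else 0 := by
  have hsucc : p ^ j - 1 = (p ^ j - 2) + 1 := by omega
  have key : (Smat p j) ^ (p ^ j - 1) = Smat p j * Smat p j ^ (p ^ j - 2) := by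
    rw [← pow_succ', ← hsucc]
  rw [key, Matrix.mul_apply]
  have htlt : p ^ j - 2 < p ^ j - 1 := by omega
  rw [Finset.sum_eq_single (⟨p ^ j - 2, htlt⟩ : Fin (p ^ j - 1))]
  · rw [Smat_pow_col0 p j h3 hn _ (by omega) le_rfl]
    simp only [if_pos rfl, mul_neg_one, Smat, Matrix.of_apply]
    by_cases hi : (i : ℕ) = 0
    · simp [hi]
    · have h2 : ¬ ((i:ℕ) = (p ^ j - 2) + 1) := by
        have := i.isLt; omega
      simp [hi, h2]
  · intro b _ hb
    rw [Smat_pow_col0 p j h3 hn _ (by omega) le_rfl]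
    have : ¬((b : ℕ) = p ^ j - 2) := fun h => hb (Fin.ext h)
    simp [this]
  · intro h; exact absurd (Finset.mem_univ _) h

lemma Bmat_pow_col0_diag (p j : ℕ) (h3 : 3 ≤ p ^ j) (hn : 0 < p ^ j - 1)
    (k : ℕ) (hk1 : 1 ≤ k) (hk2 : k ≤ p ^ j - 2) (hklt : k < p ^ j - 1) :
    (Bmat p j ^ k) ⟨k, hklt⟩ ⟨0, hn⟩ = -1 := by
  rw [Bmat, (Commute.one_left (Smat p j)).add_pow k, Matrix.sum_apply]
  simp only [one_pow, one_mul]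
  have hterm : ∀ m : ℕ,
      ((Smat p j ^ (k - m) * ((k.choose m : ℕ) : Matrix (Fin (p ^ j - 1)) (Fin (p ^ j - 1)) ℤ))
        ⟨k, hklt⟩ ⟨0, hn⟩)
      = (Smat p j ^ (k - m)) ⟨k, hklt⟩ ⟨0, hn⟩ * (k.choose m : ℤ) := by
    intro m
    rw [← Matrix.diagonal_natCast, Matrix.mul_diagonal]
  rw [Finset.sum_congr rfl (fun m _ => hterm m)]
  rw [Finset.sum_eq_single 0]
  · rw [Nat.sub_zero, Smat_pow_col0 p j h3 hn k hk1 hk2]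
    simp
  · intro b hb hb0
    simp only [Finset.mem_range] at hb
    by_cases hbk : k - b = 0
    · rw [hbk, pow_zero, Matrix.one_apply_ne]
      · ring
      · intro h
        have := congrArg Fin.val h
        simp at this
        omega
    · rw [Smat_pow_col0 p j h3 hn (k - b) (by omega) (by omega)]
      have : ¬ ((k : ℕ) = k - b) := by omega
      simp [this]
  · intro h
    simp at h

lemma Bmat_pow_top00 (p j : ℕ) (h3 : 3 ≤ p ^ j) (hn : 0 < p ^ j - 1) :
    (Bmat p j ^ (p ^ j - 1)) ⟨0, hn⟩ ⟨0, hn⟩ = (p : ℤ) ^ j + 1 := by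
  set n := p ^ j - 1 with hdefn
  rw [Bmat, (Commute.one_left (Smat p j)).add_pow n, Matrix.sum_apply]
  simp only [one_pow, one_mul]
  have hterm : ∀ m : ℕ,
      ((Smat p j ^ (n - m) * ((n.choose m : ℕ) : Matrix (Fin (p ^ j - 1)) (Fin (p ^ j - 1)) ℤ))
        ⟨0, hn⟩ ⟨0, hn⟩)
      = (Smat p j ^ (n - m)) ⟨0, hn⟩ ⟨0, hn⟩ * (n.choose m : ℤ) := by
    intro m
    rw [← Matrix.diagonal_natCast, Matrix.mul_diagonal]
  rw [Finset.sum_congr rfl (fun m _ => hterm m), Finset.sum_range_succ]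
  have hlast : (Smat p j ^ (n - n)) ⟨0, hn⟩ ⟨0, hn⟩ * (n.choose n : ℤ) = 1 := by
    simp [Nat.sub_self]
  rw [hlast, Finset.sum_eq_single 0]
  · rw [Nat.sub_zero, Smat_pow_top p j h3 hn]
    simp
  · intro b hb hb0
    simp only [Finset.mem_range] at hb
    rw [Smat_pow_col0 p j h3 hn (n - b) (by omega) (by omega)]
    have : ¬ ((0 : ℕ) = n - b) := by omega
    simp [this]
  · intro h
    simp only [Finset.mem_range] at h
    omega

theorem Bmat_pow_ne_one (p j : ℕ) (hp : p.Prime) (hodd : Odd p) (hj : 0 < j) (hn : 0 < p ^ j - 1) :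
    ((Bmat p j ^ (p ^ j - 1)) ⟨0, hn⟩ ⟨0, hn⟩ ≡ (p : ℤ) ^ j + 1 [ZMOD ((p : ℤ) ^ (j + 1))]) ∧
    (∀ k : ℕ, 1 ≤ k → k ≤ p ^ j - 2 →
      ∃ i : Fin (p ^ j - 1), 0 < (i : ℕ) ∧
        (Bmat p j ^ k) i ⟨0, hn⟩ ≡ -1 [ZMOD (p : ℤ)]) ∧
    (∀ k : ℕ, 1 ≤ k → k ≤ p ^ j - 1 →
      ¬ ((∀ c : Fin (p ^ j - 1),
            (Bmat p j ^ k) ⟨0, hn⟩ c ≡ (1 : Matrix (Fin (p ^ j - 1)) (Fin (p ^ j - 1)) ℤ) ⟨0, hn⟩ c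
              [ZMOD ((p : ℤ) ^ (j + 1))]) ∧
          (∀ r c : Fin (p ^ j - 1), (r : ℕ) ≠ 0 →
            (Bmat p j ^ k) r c ≡ (1 : Matrix (Fin (p ^ j - 1)) (Fin (p ^ j - 1)) ℤ) r c
              [ZMOD (p : ℤ)]))) := by
  have hp2 : p ≠ 2 := by
    rintro rfl
    exact (by norm_num : ¬ Odd 2) hodd
  have hp3 : 3 ≤ p := by have := hp.two_le; omega
  have h3 : 3 ≤ p ^ j := le_trans hp3 (Nat.le_self_pow (by omega) p)
  refine ⟨?_, ?_, ?_⟩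
  · rw [Bmat_pow_top00 p j h3 hn]
  · intro k hk1 hk2
    refine ⟨⟨k, by omega⟩, by simpa using (by omega : 0 < k), ?_⟩
    rw [Bmat_pow_col0_diag p j h3 hn k hk1 hk2]
  · rintro k hk1 hk2 ⟨H1, H2⟩
    by_cases hk : k ≤ p ^ j - 2
    · have hklt : k < p ^ j - 1 := by omega
      have h := H2 ⟨k, hklt⟩ ⟨0, hn⟩ (by simpa using (by omega : k ≠ 0))
      rw [Bmat_pow_col0_diag p j h3 hn k hk1 hk hklt] at h
      rw [Matrix.one_apply_ne (by
        intro hcontr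
        have := congrArg Fin.val hcontr
        simp at this
        omega)] at h
      have hdvd : (p : ℤ) ∣ 0 - (-1) := Int.ModEq.dvd h
      norm_num at hdvd
      have := Int.le_of_dvd one_pos hdvd
      have : (3 : ℤ) ≤ p := by exact_mod_cast hp3
      omega
    · have hk' : k = p ^ j - 1 := by omega
      subst hk'
      have h := H1 ⟨0, hn⟩
      rw [Bmat_pow_top00 p j h3 hn, Matrix.one_apply_eq] at h
      have hdvd : (p : ℤ) ^ (j + 1) ∣ 1 - ((p : ℤ) ^ j + 1) := Int.ModEq.dvd h
      have hdvd' : (p : ℤ) ^ (j + 1) ∣ (p : ℤ) ^ j := by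
        have : (1 : ℤ) - ((p : ℤ) ^ j + 1) = -(p : ℤ) ^ j := by ring
        rw [this] at hdvd
        exact (dvd_neg).mp hdvd
      have hple : (p : ℤ) ^ (j + 1) ≤ (p : ℤ) ^ j :=
        Int.le_of_dvd (by positivity) hdvd'
      have hplt : (p : ℤ) ^ j < (p : ℤ) ^ (j + 1) := by
        have h1 : (1 : ℤ) < p := by exact_mod_cast (by omega : 1 < p)
        exact pow_lt_pow_right₀ h1 (by omega)
      omega
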